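/- (Non-degeneracy of corrected coordinates, lower bound) Let φ : B_r → ℝ^d be such that δ := sup over the relevant scales of (1/s²)⨍_{B_s}|φ − ⨍_{B_s}φ|² satisfies δ ≤ δ₀(d) small, and let ξ ∈ ℝ^d. Then ⨍_{B_r} |ξ + ∇φ_ξ|² ≥ (1 − C(d) δ^{1/4}) |ξ|², where φ_ξ := Σ_i ξ_i φ_i. -/

import Mathlib

open MeasureTheory Metric

/-- Cauchy-Schwarz: (∫ f)² ≤ μ(univ) ∫ f². -/
lemma my_sq_integral_le {α : Type*} [MeasurableSpace α] (μ : Measure α) (hμ : μ Set.univ ≠ ⊤)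
    {f : α → ℝ} (hf : Integrable f μ) (hf2 : Integrable (fun x => f x ^ 2) μ) :
    (∫ x, f x ∂μ) ^ 2 ≤ (μ Set.univ).toReal * ∫ x, f x ^ 2 ∂μ := by
  haveI : IsFiniteMeasure μ := ⟨lt_top_iff_ne_top.mpr hμ⟩
  set m : ℝ := (μ Set.univ).toReal with hm
  have hm0 : 0 ≤ m := ENNReal.toReal_nonneg
  rcases eq_or_lt_of_le hm0 with h0 | hpos
  · -- measure zero
    have : μ = 0 := by
      have : μ Set.univ = 0 := by
        have := ENNReal.toReal_eq_zero_iff (μ Set.univ)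
        rcases this.mp h0.symm with h | h
        · exact h
        · exact absurd h hμ
      exact Measure.measure_univ_eq_zero.mp this
    subst this
    simp
  · set a : ℝ := (∫ x, f x ∂μ) / m with ha
    have key : 0 ≤ ∫ x, (f x - a) ^ 2 ∂μ := integral_nonneg (fun x => sq_nonneg _)
    have expand : ∫ x, (f x - a) ^ 2 ∂μ
        = (∫ x, f x ^ 2 ∂μ) - 2 * a * (∫ x, f x ∂μ) + a ^ 2 * m := by
      have : (fun x => (f x - a) ^ 2) = fun x => (f x ^ 2 - 2 * a * f x) + a ^ 2 := by
        funext x; ring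
      have hsub : Integrable (fun x => f x ^ 2 - 2 * a * f x) μ := hf2.sub (hf.const_mul (2 * a))
      rw [this, integral_add hsub (integrable_const _),
        integral_sub hf2 (hf.const_mul (2 * a)), MeasureTheory.integral_const_mul, integral_const]
      simp [hm, smul_eq_mul]
      rw [measureReal_def]; ring
    rw [expand] at key
    have hma : a * m = ∫ x, f x ∂μ := by
      rw [ha, div_mul_cancel₀ _ hpos.ne']
    nlinarith [key, sq_nonneg a, hpos]

/-- continuous functions are integrable on balls -/
lemma my_intBall {d : ℕ} {f : EuclideanSpace ℝ (Fin d) → ℝ} (hf : Continuous f) (R : ℝ) :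
    IntegrableOn f (ball (0 : EuclideanSpace ℝ (Fin d)) R) volume :=
  (hf.continuousOn.integrableOn_compact (isCompact_closedBall (0 : EuclideanSpace ℝ (Fin d)) R)).mono_set
    ball_subset_closedBall

/-- translation bound: ∫_{B_s} K(x+a) ≤ ∫_{B_r} K for nonneg K, s + ‖a‖ ≤ r -/
lemma my_trans {d : ℕ} {K : EuclideanSpace ℝ (Fin d) → ℝ} (hK : Continuous K)
    (hK0 : ∀ y, 0 ≤ K y) {s r : ℝ} {a : EuclideanSpace ℝ (Fin d)} (h : s + ‖a‖ ≤ r) :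
    ∫ x in ball (0 : EuclideanSpace ℝ (Fin d)) s, K (x + a)
      ≤ ∫ y in ball (0 : EuclideanSpace ℝ (Fin d)) r, K y := by
  set B2 := ball (0 : EuclideanSpace ℝ (Fin d)) r
  have hind : Integrable (B2.indicator K) volume :=
    (my_intBall hK r).integrable_indicator measurableSet_ball
  have h1 : ∫ x in ball (0 : EuclideanSpace ℝ (Fin d)) s, K (x + a)
      = ∫ x in ball (0 : EuclideanSpace ℝ (Fin d)) s, B2.indicator K (x + a) := by
    apply setIntegral_congr_fun measurableSet_ball
    intro x hx
    simp only
    rw [Set.indicator_of_mem]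
    simp only [B2, mem_ball, dist_zero_right] at hx ⊢
    calc ‖x + a‖ ≤ ‖x‖ + ‖a‖ := norm_add_le _ _
      _ < s + ‖a‖ := by simpa using hx
      _ ≤ r := h
  rw [h1]
  calc ∫ x in ball (0 : EuclideanSpace ℝ (Fin d)) s, B2.indicator K (x + a)
      ≤ ∫ x, B2.indicator K (x + a) := by
        apply setIntegral_le_integral (hind.comp_add_right a)
        filter_upwards with x
        exact Set.indicator_nonneg (fun y _ => hK0 y) _
    _ = ∫ x, B2.indicator K x := integral_add_right_eq_self _ a
    _ = ∫ y in B2, K y := integral_indicator measurableSet_ball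
set_option maxHeartbeats 2000000 in
lemma my_core (d : ℕ) {r t : ℝ} (hr : 0 < r) (ht : 0 < t) (htr : t ≤ r)
    {ψ : EuclideanSpace ℝ (Fin d) → ℝ} (hψ : ContDiff ℝ 1 ψ)
    {ξ : EuclideanSpace ℝ (Fin d)} (hξ : ξ ≠ 0) (c : ℝ) :
    ‖ξ‖ ^ 2 * (volume (ball (0 : EuclideanSpace ℝ (Fin d)) (r - t))).toReal
      - 4 * ‖ξ‖ / t * ∫ x in ball (0 : EuclideanSpace ℝ (Fin d)) r, |ψ x - c|
    ≤ ∫ x in ball (0 : EuclideanSpace ℝ (Fin d)) r, ‖ξ + gradient ψ x‖ ^ 2 := by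
  have hnξ : (0:ℝ) < ‖ξ‖ := norm_pos_iff.mpr hξ
  set τ : ℝ := t / ‖ξ‖ with hτdef
  have hτ : 0 < τ := div_pos ht hnξ
  have hτξ : τ * ‖ξ‖ = t := div_mul_cancel₀ t hnξ.ne'
  set B1 := ball (0 : EuclideanSpace ℝ (Fin d)) (r - t) with hB1
  set B2 := ball (0 : EuclideanSpace ℝ (Fin d)) r with hB2
  have hψc : Continuous ψ := hψ.continuous
  have hψd : Differentiable ℝ ψ := hψ.differentiable one_ne_zero
  set F : EuclideanSpace ℝ (Fin d) → ℝ := fun y => ‖ξ‖ ^ 2 + fderiv ℝ ψ y ξ with hF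
  have hFc : Continuous F :=
    continuous_const.add ((hψ.continuous_fderiv one_ne_zero).clm_apply continuous_const)
  set G : EuclideanSpace ℝ (Fin d) → EuclideanSpace ℝ (Fin d) :=
    fun x => ξ + gradient ψ x with hG
  have hGnc : Continuous fun x => ‖G x‖ ^ 2 := by
    have hGc : Continuous G := continuous_const.add
      ((InnerProductSpace.toDual ℝ (EuclideanSpace ℝ (Fin d))).symm.continuous.comp
        (hψ.continuous_fderiv one_ne_zero))
    exact (hGc.norm).pow 2
  have hFinner : ∀ y, F y = inner ℝ ξ (G y) := by
    intro y
    have h1 : (inner ℝ ξ (gradient ψ y) : ℝ) = fderiv ℝ ψ y ξ := by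
      rw [real_inner_comm]; exact InnerProductSpace.toDual_symm_apply
    have h2 : (inner ℝ ξ (ξ + gradient ψ y) : ℝ) = ‖ξ‖ ^ 2 + fderiv ℝ ψ y ξ := by
      rw [inner_add_right, h1, real_inner_self_eq_norm_sq]
    exact h2.symm
  have hF2 : ∀ y, F y ^ 2 ≤ ‖ξ‖ ^ 2 * ‖G y‖ ^ 2 := by
    intro y
    rw [hFinner y]
    calc (inner ℝ ξ (G y) : ℝ) ^ 2 ≤ (‖ξ‖ * ‖G y‖) ^ 2 := by
          rw [← sq_abs]
          exact pow_le_pow_left₀ (abs_nonneg _) (abs_real_inner_le_norm _ _) 2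
      _ = ‖ξ‖ ^ 2 * ‖G y‖ ^ 2 := by ring
  -- FTC along lines
  have hderiv : ∀ (x : EuclideanSpace ℝ (Fin d)) (σ : ℝ),
      HasDerivAt (fun σ : ℝ => ψ (x + σ • ξ)) (fderiv ℝ ψ (x + σ • ξ) ξ) σ := by
    intro x σ
    have hline : HasDerivAt (fun σ : ℝ => x + σ • ξ) ξ σ := by
      simpa using ((hasDerivAt_id σ).smul_const ξ).const_add x
    exact (hψd _).hasFDerivAt.comp_hasDerivAt σ hline
  have hlinec : ∀ x : EuclideanSpace ℝ (Fin d),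
      Continuous fun σ : ℝ => x + σ • ξ := fun x =>
    continuous_const.add (continuous_id.smul continuous_const)
  have hFTC : ∀ x, ∫ σ in (0:ℝ)..τ, F (x + σ • ξ)
      = τ * ‖ξ‖ ^ 2 + (ψ (x + τ • ξ) - ψ x) := by
    intro x
    have hcont : Continuous fun σ : ℝ => fderiv ℝ ψ (x + σ • ξ) ξ :=
      ((hψ.continuous_fderiv one_ne_zero).comp (hlinec x)).clm_apply continuous_const
    have h1 : (fun σ : ℝ => F (x + σ • ξ))
        = fun σ : ℝ => ‖ξ‖ ^ 2 + fderiv ℝ ψ (x + σ • ξ) ξ := rfl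
    rw [h1, intervalIntegral.integral_add intervalIntegrable_const
      (hcont.intervalIntegrable _ _), intervalIntegral.integral_const,
      intervalIntegral.integral_eq_sub_of_hasDerivAt (fun σ _ => hderiv x σ)
        (hcont.intervalIntegrable _ _)]
    simp [smul_eq_mul]
  -- pointwise Cauchy-Schwarz in σ
  have hCS : ∀ x : EuclideanSpace ℝ (Fin d),
      (τ * ‖ξ‖ ^ 2 + (ψ (x + τ • ξ) - ψ x)) ^ 2
        ≤ τ * ∫ σ in Set.Ioc (0:ℝ) τ, F (x + σ • ξ) ^ 2 := by
    intro x
    rw [← hFTC x, intervalIntegral.integral_of_le hτ.le]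
    have hg : Continuous fun σ : ℝ => F (x + σ • ξ) := hFc.comp (hlinec x)
    have hμ : (volume.restrict (Set.Ioc (0:ℝ) τ)) Set.univ ≠ ⊤ := by
      rw [Measure.restrict_apply_univ]
      exact (measure_Ioc_lt_top).ne
    have key := my_sq_integral_le (volume.restrict (Set.Ioc (0:ℝ) τ)) hμ
      (f := fun σ => F (x + σ • ξ)) hg.integrableOn_Ioc ((hg.pow 2).integrableOn_Ioc)
    rw [Measure.restrict_apply_univ, Real.volume_Ioc,
      ENNReal.toReal_ofReal (by linarith)] at key
    simpa using key
  -- product integrability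
  set P : (EuclideanSpace ℝ (Fin d)) × ℝ → ℝ := fun p => F (p.1 + p.2 • ξ) ^ 2 with hP
  have hPc : Continuous P :=
    (hFc.comp (continuous_fst.add (continuous_snd.smul continuous_const))).pow 2
  have hPint : Integrable P
      ((volume.restrict B1).prod (volume.restrict (Set.Ioc (0:ℝ) τ))) := by
    rw [Measure.prod_restrict]
    refine (hPc.continuousOn.integrableOn_compact
      ((isCompact_closedBall (0 : EuclideanSpace ℝ (Fin d)) (r - t)).prod
        (isCompact_Icc (a := (0:ℝ)) (b := τ)))).mono_set ?_
    exact Set.prod_mono ball_subset_closedBall Set.Ioc_subset_Icc_self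
  have hRHSint : IntegrableOn (fun x => ∫ σ in Set.Ioc (0:ℝ) τ, F (x + σ • ξ) ^ 2)
      B1 volume := hPint.integral_prod_left
  -- Step A
  have hΔc : Continuous fun x : EuclideanSpace ℝ (Fin d) =>
      τ * ‖ξ‖ ^ 2 + (ψ (x + τ • ξ) - ψ x) :=
    continuous_const.add ((hψc.comp (continuous_id.add continuous_const)).sub hψc)
  have stepA : ∫ x in B1, (τ * ‖ξ‖ ^ 2 + (ψ (x + τ • ξ) - ψ x)) ^ 2
      ≤ τ * ∫ x in B1, ∫ σ in Set.Ioc (0:ℝ) τ, F (x + σ • ξ) ^ 2 := by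
    rw [← MeasureTheory.integral_const_mul]
    exact setIntegral_mono_on (my_intBall (hΔc.pow 2) _) (hRHSint.const_mul τ)
      measurableSet_ball (fun x _ => hCS x)
  -- Step B : swap and translate
  have hswap : ∫ x in B1, ∫ σ in Set.Ioc (0:ℝ) τ, F (x + σ • ξ) ^ 2
      = ∫ σ in Set.Ioc (0:ℝ) τ, ∫ x in B1, F (x + σ • ξ) ^ 2 :=
    integral_integral_swap hPint
  have stepB : ∫ σ in Set.Ioc (0:ℝ) τ, ∫ x in B1, F (x + σ • ξ) ^ 2
      ≤ τ * ∫ y in B2, F y ^ 2 := by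
    have hmono : ∀ σ ∈ Set.Ioc (0:ℝ) τ,
        ∫ x in B1, F (x + σ • ξ) ^ 2 ≤ ∫ y in B2, F y ^ 2 := by
      intro σ hσ
      refine my_trans (hFc.pow 2) (fun y => sq_nonneg _) ?_
      rw [norm_smul, Real.norm_eq_abs, abs_of_pos hσ.1]
      have : σ * ‖ξ‖ ≤ τ * ‖ξ‖ := mul_le_mul_of_nonneg_right hσ.2 hnξ.le
      rw [hτξ] at this
      linarith
    calc ∫ σ in Set.Ioc (0:ℝ) τ, ∫ x in B1, F (x + σ • ξ) ^ 2
        ≤ ∫ _σ in Set.Ioc (0:ℝ) τ, ∫ y in B2, F y ^ 2 := by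
          refine setIntegral_mono_on hPint.integral_prod_right
            (integrableOn_const measure_Ioc_lt_top.ne) measurableSet_Ioc hmono
      _ = τ * ∫ y in B2, F y ^ 2 := by
          rw [setIntegral_const, measureReal_def, Real.volume_Ioc, smul_eq_mul,
            ENNReal.toReal_ofReal (by linarith), sub_zero]
  have stepC : ∫ y in B2, F y ^ 2 ≤ ‖ξ‖ ^ 2 * ∫ y in B2, ‖G y‖ ^ 2 := by
    rw [← MeasureTheory.integral_const_mul]
    exact setIntegral_mono_on (my_intBall (hFc.pow 2) _)
      ((my_intBall hGnc _).const_mul _) measurableSet_ball (fun y _ => hF2 y)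
  have upper : ∫ x in B1, (τ * ‖ξ‖ ^ 2 + (ψ (x + τ • ξ) - ψ x)) ^ 2
      ≤ τ ^ 2 * ‖ξ‖ ^ 2 * ∫ y in B2, ‖G y‖ ^ 2 := by
    calc ∫ x in B1, (τ * ‖ξ‖ ^ 2 + (ψ (x + τ • ξ) - ψ x)) ^ 2
        ≤ τ * ∫ x in B1, ∫ σ in Set.Ioc (0:ℝ) τ, F (x + σ • ξ) ^ 2 := stepA
      _ = τ * ∫ σ in Set.Ioc (0:ℝ) τ, ∫ x in B1, F (x + σ • ξ) ^ 2 := by rw [hswap]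
      _ ≤ τ * (τ * ∫ y in B2, F y ^ 2) := by
          exact mul_le_mul_of_nonneg_left stepB hτ.le
      _ ≤ τ * (τ * (‖ξ‖ ^ 2 * ∫ y in B2, ‖G y‖ ^ 2)) := by
          have := mul_le_mul_of_nonneg_left stepC hτ.le
          exact mul_le_mul_of_nonneg_left this hτ.le
      _ = τ ^ 2 * ‖ξ‖ ^ 2 * ∫ y in B2, ‖G y‖ ^ 2 := by ring
  -- lower bound
  have hψτc : Continuous fun x : EuclideanSpace ℝ (Fin d) => ψ (x + τ • ξ) :=
    hψc.comp (continuous_id.add continuous_const)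
  have lower : (τ * ‖ξ‖ ^ 2) ^ 2 * (volume B1).toReal
      + 2 * (τ * ‖ξ‖ ^ 2) * ((∫ x in B1, (ψ (x + τ • ξ) - c)) - ∫ x in B1, (ψ x - c))
      ≤ ∫ x in B1, (τ * ‖ξ‖ ^ 2 + (ψ (x + τ • ξ) - ψ x)) ^ 2 := by
    have hint1 : IntegrableOn (fun x => ψ (x + τ • ξ) - c) B1 volume :=
      my_intBall (hψτc.sub continuous_const) _
    have hint2 : IntegrableOn (fun x : EuclideanSpace ℝ (Fin d) => ψ x - c) B1 volume :=
      my_intBall (hψc.sub continuous_const) _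
    have hsub : IntegrableOn (fun x => (ψ (x + τ • ξ) - c) - (ψ x - c)) B1 volume := by
      exact hint1.sub hint2
    have hcm : IntegrableOn
        (fun x => 2 * (τ * ‖ξ‖ ^ 2) * ((ψ (x + τ • ξ) - c) - (ψ x - c))) B1 volume := by
      exact hsub.const_mul _
    have expand : ∫ x in B1, ((τ * ‖ξ‖ ^ 2) ^ 2
          + 2 * (τ * ‖ξ‖ ^ 2) * ((ψ (x + τ • ξ) - c) - (ψ x - c)))
        = (τ * ‖ξ‖ ^ 2) ^ 2 * (volume B1).toReal
          + 2 * (τ * ‖ξ‖ ^ 2) * ((∫ x in B1, (ψ (x + τ • ξ) - c)) - ∫ x in B1, (ψ x - c)) := by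
      rw [integral_add (integrableOn_const (C := (τ * ‖ξ‖ ^ 2) ^ 2) measure_ball_lt_top.ne) hcm,
        integral_const, measureReal_def, MeasureTheory.integral_const_mul, integral_sub hint1 hint2]
      simp [smul_eq_mul]
      ring
    rw [← expand]
    refine setIntegral_mono_on ?_ (my_intBall (hΔc.pow 2) _) measurableSet_ball ?_
    · exact (integrableOn_const measure_ball_lt_top.ne).add hcm
    · intro x _
      nlinarith [sq_nonneg (ψ (x + τ • ξ) - ψ x)]
  -- boundary terms
  have habsc : Continuous fun y : EuclideanSpace ℝ (Fin d) => |ψ y - c| :=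
    (hψc.sub continuous_const).abs
  have hb1 : -(∫ y in B2, |ψ y - c|) ≤ ∫ x in B1, (ψ (x + τ • ξ) - c) := by
    have step1 : ∫ x in B1, |ψ (x + τ • ξ) - c| ≤ ∫ y in B2, |ψ y - c| := by
      refine my_trans habsc (fun y => abs_nonneg _) ?_
      rw [norm_smul, Real.norm_eq_abs, abs_of_pos hτ, hτξ]
      linarith
    have step2 : -(∫ x in B1, |ψ (x + τ • ξ) - c|) ≤ ∫ x in B1, (ψ (x + τ • ξ) - c) := by
      rw [← integral_neg]
      refine setIntegral_mono_on ((my_intBall (habsc.comp (continuous_id.add continuous_const)) _).neg)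
        (my_intBall (hψτc.sub continuous_const) _) measurableSet_ball ?_
      intro x _
      exact neg_abs_le _
    linarith
  have hb2 : ∫ x in B1, (ψ x - c) ≤ ∫ y in B2, |ψ y - c| := by
    have step1 : ∫ x in B1, (ψ x - c) ≤ ∫ x in B1, |ψ x - c| :=
      setIntegral_mono_on (my_intBall (hψc.sub continuous_const) _)
        (my_intBall habsc _) measurableSet_ball (fun x _ => le_abs_self _)
    have step2 : ∫ x in B1, |ψ x - c| ≤ ∫ y in B2, |ψ y - c| := by
      refine setIntegral_mono_set (my_intBall habsc _) ?_ ?_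
      · filter_upwards with y; exact abs_nonneg _
      · exact (ball_subset_ball (by linarith)).eventuallyLE
    linarith
  -- assemble
  set S := ∫ y in B2, ‖G y‖ ^ 2 with hS
  set M := ∫ y in B2, |ψ y - c| with hM
  set V := (volume B1).toReal with hV
  have hXY : -(2 * M) ≤ (∫ x in B1, (ψ (x + τ • ξ) - c)) - ∫ x in B1, (ψ x - c) := by
    linarith
  have chain : (τ * ‖ξ‖ ^ 2) ^ 2 * V - 4 * (τ * ‖ξ‖ ^ 2) * M ≤ τ ^ 2 * ‖ξ‖ ^ 2 * S := by
    have h2 := mul_le_mul_of_nonneg_left hXY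
      (by positivity : (0:ℝ) ≤ 2 * (τ * ‖ξ‖ ^ 2))
    linarith [lower, upper]
  have hpos : (0:ℝ) < τ ^ 2 * ‖ξ‖ ^ 2 := by positivity
  rw [← mul_le_mul_iff_right₀ hpos]
  calc τ ^ 2 * ‖ξ‖ ^ 2 * (‖ξ‖ ^ 2 * V - 4 * ‖ξ‖ / t * M)
      = (τ * ‖ξ‖ ^ 2) ^ 2 * V - 4 * (τ * ‖ξ‖ ^ 2) * M * (τ * ‖ξ‖ / t) := by ring
    _ = (τ * ‖ξ‖ ^ 2) ^ 2 * V - 4 * (τ * ‖ξ‖ ^ 2) * M := by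
        rw [hτξ, div_self ht.ne']; ring
    _ ≤ τ ^ 2 * ‖ξ‖ ^ 2 * S := chain

set_option maxHeartbeats 2000000 in
theorem stmt17 (d : ℕ) (hd : 1 ≤ d) :
    ∃ δ₀ C : ℝ, 0 < δ₀ ∧ 0 < C ∧
    ∀ (r : ℝ), 1 ≤ r →
    ∀ (φ : Fin d → EuclideanSpace ℝ (Fin d) → ℝ),
      (∀ i, ContDiff ℝ 1 (φ i)) →
    ∀ δ : ℝ, 0 ≤ δ → δ ≤ δ₀ →
      (∀ s : ℝ, 0 < s → s ≤ r →
        (1 / s ^ 2) * ⨍ x in ball (0 : EuclideanSpace ℝ (Fin d)) s,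
          ∑ i, (φ i x - ⨍ y in ball (0 : EuclideanSpace ℝ (Fin d)) s, φ i y) ^ 2 ≤ δ) →
    ∀ ξ : EuclideanSpace ℝ (Fin d),
      (1 - C * δ ^ ((1 : ℝ) / 4)) * ‖ξ‖ ^ 2 ≤
        ⨍ x in ball (0 : EuclideanSpace ℝ (Fin d)) r,
          ‖ξ + gradient (fun y => ∑ i, ξ i * φ i y) x‖ ^ 2 := by
  haveI : Nonempty (Fin d) := ⟨⟨0, hd⟩⟩
  refine ⟨1, (d : ℝ) + 4, one_pos, by positivity, ?_⟩
  intro r hr1 φ hφ δ hδ0 hδ1 hyp ξ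
  have hr : (0:ℝ) < r := lt_of_lt_of_le one_pos hr1
  set B2 := ball (0 : EuclideanSpace ℝ (Fin d)) r with hB2
  set W := (volume B2).toReal with hWdef
  have hW : 0 < W :=
    ENNReal.toReal_pos (measure_ball_pos volume _ hr).ne' measure_ball_lt_top.ne
  -- trivial case ξ = 0
  by_cases hξ0 : ξ = 0
  · subst hξ0
    have h0 : ‖(0 : EuclideanSpace ℝ (Fin d))‖ ^ 2 = 0 := by simp
    rw [h0, mul_zero, setAverage_eq, smul_eq_mul]
    exact mul_nonneg (by positivity)
      (setIntegral_nonneg measurableSet_ball fun x _ => by positivity)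
  have hnξ : (0:ℝ) < ‖ξ‖ := norm_pos_iff.mpr hξ0
  -- the corrected coordinate function
  set ψ : EuclideanSpace ℝ (Fin d) → ℝ := fun y => ∑ i, ξ i * φ i y with hψdef
  have hψ : ContDiff ℝ 1 ψ := ContDiff.sum (fun i _ => contDiff_const.mul (hφ i))
  have hψc : Continuous ψ := hψ.continuous
  set ci : Fin d → ℝ := fun i => ⨍ y in B2, φ i y with hcidef
  have hci : ∀ i, (⨍ y in B2, φ i y) = ci i := fun i => rfl
  set c : ℝ := ⨍ x in B2, ψ x with hcdef
  set S := ∫ x in B2, ‖ξ + gradient ψ x‖ ^ 2 with hSdef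
  set M := ∫ x in B2, |ψ x - c| with hMdef
  -- oscillation bound from hypothesis at scale r
  have hosc : ∫ x in B2, ∑ i, (φ i x - ci i) ^ 2 ≤ r ^ 2 * W * δ := by
    have h := hyp r hr le_rfl
    simp only [← hB2, hci] at h
    rw [setAverage_eq, smul_eq_mul, measureReal_def, ← hWdef] at h
    have h3 := mul_le_mul_of_nonneg_left h
      (le_of_lt (by positivity : (0:ℝ) < r ^ 2 * W))
    calc ∫ x in B2, ∑ i, (φ i x - ci i) ^ 2
        = r ^ 2 * W * (1 / r ^ 2 * (W⁻¹ * ∫ x in B2, ∑ i, (φ i x - ci i) ^ 2)) := by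
          field_simp
      _ ≤ r ^ 2 * W * δ := h3
  -- decomposition of ψ - c
  have hintφ : ∀ i, IntegrableOn (fun x => ξ i * φ i x) B2 volume :=
    fun i => (my_intBall (hφ i).continuous r).const_mul (ξ i)
  have hc : c = ∑ i, ξ i * ci i := by
    rw [hcdef, setAverage_eq, smul_eq_mul]
    have hint : ∫ x in B2, ψ x = ∑ i, ξ i * ∫ x in B2, φ i x := by
      simp only [hψdef]
      rw [integral_finset_sum _ (fun i _ => hintφ i)]
      simp [MeasureTheory.integral_const_mul]
    rw [hint, Finset.mul_sum]
    refine Finset.sum_congr rfl fun i _ => ?_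
    rw [hcidef]
    simp only
    rw [setAverage_eq, smul_eq_mul, measureReal_def, ← hWdef]
    ring
  have hnormsq : ‖ξ‖ ^ 2 = ∑ i, (ξ i) ^ 2 := by
    rw [EuclideanSpace.norm_eq, Real.sq_sqrt (by positivity)]
    simp
  have hpt : ∀ x, (ψ x - c) ^ 2 ≤ ‖ξ‖ ^ 2 * ∑ i, (φ i x - ci i) ^ 2 := by
    intro x
    have hx : ψ x - c = ∑ i, ξ i * (φ i x - ci i) := by
      simp only [hψdef]
      rw [hc, ← Finset.sum_sub_distrib]
      exact Finset.sum_congr rfl fun i _ => by ring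
    rw [hx, hnormsq]
    exact Finset.sum_mul_sq_le_sq_mul_sq _ _ _
  have hcontsum : Continuous fun x => ∑ i, (φ i x - ci i) ^ 2 :=
    continuous_finset_sum _ fun i _ => ((hφ i).continuous.sub continuous_const).pow 2
  have habsc : Continuous fun x => |ψ x - c| := (hψc.sub continuous_const).abs
  have hL2 : ∫ x in B2, (ψ x - c) ^ 2 ≤ ‖ξ‖ ^ 2 * (r ^ 2 * W * δ) := by
    calc ∫ x in B2, (ψ x - c) ^ 2
        ≤ ∫ x in B2, ‖ξ‖ ^ 2 * ∑ i, (φ i x - ci i) ^ 2 :=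
          setIntegral_mono_on (my_intBall ((hψc.sub continuous_const).pow 2) r)
            ((my_intBall hcontsum r).const_mul _) measurableSet_ball (fun x _ => hpt x)
      _ = ‖ξ‖ ^ 2 * ∫ x in B2, ∑ i, (φ i x - ci i) ^ 2 := MeasureTheory.integral_const_mul _ _
      _ ≤ ‖ξ‖ ^ 2 * (r ^ 2 * W * δ) := mul_le_mul_of_nonneg_left hosc (by positivity)
  have hM0 : 0 ≤ M := setIntegral_nonneg measurableSet_ball fun x _ => abs_nonneg _
  have hMsq : M ^ 2 ≤ W * ∫ x in B2, (ψ x - c) ^ 2 := by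
    have hμfin : (volume.restrict B2) Set.univ ≠ ⊤ := by
      rw [Measure.restrict_apply_univ]
      exact measure_ball_lt_top.ne
    have key := my_sq_integral_le (volume.restrict B2) hμfin
      (f := fun x => |ψ x - c|) (my_intBall habsc r)
      (by simp only [sq_abs]; exact my_intBall ((hψc.sub continuous_const).pow 2) r)
    rw [Measure.restrict_apply_univ] at key
    simpa [sq_abs, ← hWdef] using key
  have hMle : M ≤ Real.sqrt δ * (r * ‖ξ‖ * W) := by
    have hsqδ : (Real.sqrt δ) ^ 2 = δ := Real.sq_sqrt hδ0
    have h1 : M ^ 2 ≤ (Real.sqrt δ * (r * ‖ξ‖ * W)) ^ 2 := by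
      have h2 := mul_le_mul_of_nonneg_left hL2 hW.le
      calc M ^ 2 ≤ W * ∫ x in B2, (ψ x - c) ^ 2 := hMsq
        _ ≤ W * (‖ξ‖ ^ 2 * (r ^ 2 * W * δ)) := h2
        _ = (Real.sqrt δ * (r * ‖ξ‖ * W)) ^ 2 := by rw [mul_pow, hsqδ]; ring
    calc M = Real.sqrt (M ^ 2) := (Real.sqrt_sq hM0).symm
      _ ≤ Real.sqrt ((Real.sqrt δ * (r * ‖ξ‖ * W)) ^ 2) := Real.sqrt_le_sqrt h1
      _ = Real.sqrt δ * (r * ‖ξ‖ * W) := Real.sqrt_sq (by positivity)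
  -- volume ratio bound
  have hVt : ∀ t : ℝ, 0 < t → t ≤ r →
      (1 - (d : ℝ) * (t / r)) * W
        ≤ (volume (ball (0 : EuclideanSpace ℝ (Fin d)) (r - t))).toReal := by
    intro t ht htr
    set b := (volume (ball (0 : EuclideanSpace ℝ (Fin d)) 1)).toReal with hbdef
    have hb : 0 ≤ b := ENNReal.toReal_nonneg
    have hball : ∀ s : ℝ, 0 ≤ s →
        (volume (ball (0 : EuclideanSpace ℝ (Fin d)) s)).toReal = s ^ d * b := by
      intro s hs
      rw [Measure.addHaar_ball volume _ hs]
      simp only [finrank_euclideanSpace, Fintype.card_fin]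
      rw [ENNReal.toReal_mul, ENNReal.toReal_ofReal (by positivity)]
    have hVeq : (volume (ball (0 : EuclideanSpace ℝ (Fin d)) (r - t))).toReal
        = (r - t) ^ d * b := hball _ (by linarith)
    have hWeq : W = r ^ d * b := hball _ hr.le
    have htr1 : t / r ≤ 1 := (div_le_one hr).mpr htr
    have hbern : 1 + (d : ℝ) * (-(t / r)) ≤ (1 + -(t / r)) ^ d :=
      one_add_mul_le_pow (by linarith) d
    have h1tr : (1 : ℝ) + -(t / r) = (r - t) / r := by field_simp; ring
    have h2 : (1 - (d : ℝ) * (t / r)) * r ^ d ≤ ((r - t) / r) ^ d * r ^ d := by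
      refine mul_le_mul_of_nonneg_right ?_ (pow_nonneg hr.le d)
      rw [← h1tr]
      have : (1 : ℝ) - (d : ℝ) * (t / r) = 1 + (d : ℝ) * (-(t / r)) := by ring
      rw [this]
      exact hbern
    have h3 : ((r - t) / r) ^ d * r ^ d = (r - t) ^ d := by
      rw [div_pow]
      field_simp
    rw [hVeq, hWeq]
    calc (1 - (d : ℝ) * (t / r)) * (r ^ d * b)
        = ((1 - (d : ℝ) * (t / r)) * r ^ d) * b := by ring
      _ ≤ (((r - t) / r) ^ d * r ^ d) * b := mul_le_mul_of_nonneg_right h2 hb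
      _ = (r - t) ^ d * b := by rw [h3]
  have havg : (⨍ x in B2, ‖ξ + gradient ψ x‖ ^ 2) = W⁻¹ * S := by
    rw [setAverage_eq, smul_eq_mul, measureReal_def, ← hWdef, ← hSdef]
  rcases eq_or_lt_of_le hδ0 with hδz | hδpos
  · -- δ = 0
    have hδ : δ = 0 := hδz.symm
    subst hδ
    have hsqrt0 : Real.sqrt 0 = 0 := Real.sqrt_zero
    have hMzero : M = 0 := le_antisymm (by simpa [hsqrt0] using hMle) hM0
    have hcore : ∀ t : ℝ, 0 < t → t ≤ r →
        ‖ξ‖ ^ 2 * ((1 - (d : ℝ) * (t / r)) * W) ≤ S := by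
      intro t ht htr
      have h1 := my_core d hr ht htr hψ hξ0 c
      rw [← hB2, ← hMdef, ← hSdef, hMzero] at h1
      have h2 := mul_le_mul_of_nonneg_left (hVt t ht htr) (sq_nonneg ‖ξ‖)
      calc ‖ξ‖ ^ 2 * ((1 - (d : ℝ) * (t / r)) * W)
          ≤ ‖ξ‖ ^ 2 * (volume (ball (0 : EuclideanSpace ℝ (Fin d)) (r - t))).toReal := h2
        _ ≤ S := by linarith
    have hlim : ‖ξ‖ ^ 2 * W ≤ S := by
      set f : ℝ → ℝ := fun t => ‖ξ‖ ^ 2 * ((1 - (d : ℝ) * (t / r)) * W) with hfdef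
      have hfc : Continuous f := by
        apply continuous_const.mul
        exact (continuous_const.sub (continuous_const.mul (continuous_id.div_const r))).mul
          continuous_const
      have hf0 : f 0 = ‖ξ‖ ^ 2 * W := by simp [hfdef]
      have hT : Filter.Tendsto f (nhdsWithin (0:ℝ) (Set.Ioi 0)) (nhds (f 0)) :=
        (hfc.tendsto 0).mono_left nhdsWithin_le_nhds
      have hev : ∀ᶠ t in nhdsWithin (0:ℝ) (Set.Ioi 0), f t ≤ S := by
        filter_upwards [self_mem_nhdsWithin,
          (eventually_lt_nhds hr).filter_mono nhdsWithin_le_nhds] with t ht1 ht2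
        exact hcore t ht1 ht2.le
      have := le_of_tendsto hT hev
      rwa [hf0] at this
    rw [havg]
    have hz : (0:ℝ) ^ ((1:ℝ)/4) = 0 := Real.zero_rpow (by norm_num)
    rw [hz, mul_zero, sub_zero, one_mul, inv_mul_eq_div, le_div_iff₀ hW]
    exact hlim
  · -- δ > 0
    set u : ℝ := δ ^ ((1:ℝ)/4) with hudef
    have hu : 0 < u := Real.rpow_pos_of_pos hδpos _
    have hu1 : u ≤ 1 := Real.rpow_le_one hδ0 hδ1 (by norm_num)
    set t : ℝ := r * u with htdef
    have ht : 0 < t := by positivity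
    have htr : t ≤ r := by
      calc t = r * u := rfl
        _ ≤ r * 1 := mul_le_mul_of_nonneg_left hu1 hr.le
        _ = r := mul_one r
    have htru : t / r = u := by
      rw [htdef]
      field_simp
    have hsq : Real.sqrt δ = u ^ 2 := by
      rw [Real.sqrt_eq_rpow, hudef, ← Real.rpow_natCast (δ ^ ((1:ℝ)/4)) 2,
        ← Real.rpow_mul hδ0]
      norm_num
    have hcore := my_core d hr ht htr hψ hξ0 c
    rw [← hB2, ← hMdef, ← hSdef] at hcore
    have hV := mul_le_mul_of_nonneg_left (hVt t ht htr) (sq_nonneg ‖ξ‖)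
    rw [htru] at hV
    have hbnd : 4 * ‖ξ‖ / t * M ≤ 4 * u * (‖ξ‖ ^ 2 * W) := by
      have h1 := mul_le_mul_of_nonneg_left hMle
        (by positivity : (0:ℝ) ≤ 4 * ‖ξ‖ / t)
      have h2 : 4 * ‖ξ‖ / t * (Real.sqrt δ * (r * ‖ξ‖ * W)) = 4 * u * (‖ξ‖ ^ 2 * W) := by
        rw [hsq, htdef]
        field_simp
      linarith [h1, h2.le, h2.ge]
    have hfinal : (1 - ((d : ℝ) + 4) * u) * ‖ξ‖ ^ 2 * W ≤ S := by
      have heq : (1 - ((d : ℝ) + 4) * u) * ‖ξ‖ ^ 2 * W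
          = ‖ξ‖ ^ 2 * ((1 - (d : ℝ) * u) * W) - 4 * u * (‖ξ‖ ^ 2 * W) := by ring
      rw [heq]
      linarith [hcore, hV, hbnd]
    rw [havg, inv_mul_eq_div, le_div_iff₀ hW]
    calc (1 - ((d : ℝ) + 4) * δ ^ ((1:ℝ)/4)) * ‖ξ‖ ^ 2 * W
        = (1 - ((d : ℝ) + 4) * u) * ‖ξ‖ ^ 2 * W := by rw [← hudef]
      _ ≤ S := hfinal
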